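/- Let X be a nonempty topological space, n a positive natural number, and suppose X^n (with the product topology) has a κ^op-like base consisting of open boxes (finite products of open sets). Then X itself has a κ^op-like base. Consequently, the least infinite κ such that X^n has a κ^op-like box base equals the Noetherian type of X. -/

import Mathlib

open Cardinal Set

universe u

variable {X : Type u}

/-- `B` is a base for the topology of `X`. -/
def IsBase [TopologicalSpace X] (B : Set (Set X)) : Prop :=
  (∀ U ∈ B, IsOpen U) ∧ ∀ W : Set X, IsOpen W → ∀ p ∈ W, ∃ U ∈ B, p ∈ U ∧ U ⊆ W

/-- `B` is a local base at `p`. -/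
def IsLocalBase [TopologicalSpace X] (p : X) (B : Set (Set X)) : Prop :=
  (∀ U ∈ B, IsOpen U ∧ p ∈ U) ∧ ∀ W : Set X, IsOpen W → p ∈ W → ∃ U ∈ B, U ⊆ W

/-- `B` is a local π-base at `p`. -/
def IsLocalPiBase [TopologicalSpace X] (p : X) (B : Set (Set X)) : Prop :=
  (∀ U ∈ B, IsOpen U ∧ U.Nonempty) ∧ ∀ W : Set X, IsOpen W → p ∈ W → ∃ U ∈ B, U ⊆ W

/-- The weight of `X`: the least infinite cardinal `κ` such that `X` has a base of
cardinality at most `κ`. -/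
noncomputable def weight (X : Type u) [TopologicalSpace X] : Cardinal.{u} :=
  sInf {κ | ℵ₀ ≤ κ ∧ ∃ B : Set (Set X), IsBase B ∧ #B ≤ κ}

/-- The character of `p` in `X`. -/
noncomputable def character [TopologicalSpace X] (p : X) : Cardinal.{u} :=
  sInf {κ | ℵ₀ ≤ κ ∧ ∃ B : Set (Set X), IsLocalBase p B ∧ #B ≤ κ}

/-- The π-character of `p` in `X`. -/
noncomputable def piCharacter [TopologicalSpace X] (p : X) : Cardinal.{u} :=
  sInf {κ | ℵ₀ ≤ κ ∧ ∃ B : Set (Set X), IsLocalPiBase p B ∧ #B ≤ κ}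

/-- A family of sets (ordered by `⊆`) is `κ^op`-like if no member is contained in
`κ`-many members. -/
def IsOpLike {Y : Type u} (B : Set (Set Y)) (κ : Cardinal.{u}) : Prop :=
  ∀ U ∈ B, #{V : Set Y // V ∈ B ∧ U ⊆ V} < κ

/-- The Noetherian type of `X`: the least infinite `κ` such that `X` has a
`κ^op`-like base. -/
noncomputable def Nt (X : Type u) [TopologicalSpace X] : Cardinal.{u} :=
  sInf {κ | ℵ₀ ≤ κ ∧ ∃ B : Set (Set X), IsBase B ∧ IsOpLike B κ}

/-- `⟨F i⟩` is a `⟨#ι, κ⟩`-splitter of `X`: a sequence of finite open covers such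
that for every index set `I` of cardinality `κ` and every choice `U i ∈ F i`
(`i ∈ I`), the interior of `⋂_{i ∈ I} U i` is empty. -/
def IsSplitter [TopologicalSpace X] {ι : Type u} (F : ι → Set (Set X))
    (κ : Cardinal.{u}) : Prop :=
  (∀ i, (F i).Finite ∧ (∀ U ∈ F i, IsOpen U) ∧ ⋃₀ F i = Set.univ) ∧
  ∀ (I : Set ι) (U : ι → Set X), #I = κ → (∀ i ∈ I, U i ∈ F i) →
    interior (⋂ i ∈ I, U i) = ∅

/-- `W ⊆ X^n` is an open box: a product of open subsets of `X`. -/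
def IsBox [TopologicalSpace X] {n : ℕ} (W : Set (Fin n → X)) : Prop :=
  ∃ U : Fin n → Set X, (∀ i, IsOpen (U i)) ∧ W = Set.univ.pi U

/-- The least infinite `κ` such that `X^n` has a `κ^op`-like base of open boxes. -/
noncomputable def NtBox (n : ℕ) (X : Type u) [TopologicalSpace X] : Cardinal.{u} :=
  sInf {κ | ℵ₀ ≤ κ ∧ ∃ B : Set (Set (Fin n → X)),
    IsBase B ∧ (∀ W ∈ B, IsBox W) ∧ IsOpLike B κ}

/-- If `X^n` (`0 < n`) has a `κ^op`-like base of open boxes, then `X` has a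
`κ^op`-like base; consequently `Nt_box(X^n) = Nt(X)`. -/
private lemma mk_pi_lt {n : ℕ} {κ : Cardinal.{u}} (hκ : ℵ₀ ≤ κ)
    (α : Fin n → Type u) (h : ∀ i, #(α i) < κ) : #(∀ i, α i) < κ := by
  induction n with
  | zero =>
      haveI : Unique (∀ i : Fin 0, α i) := Pi.uniqueOfIsEmpty _
      rw [Cardinal.mk_eq_one]
      exact lt_of_lt_of_le Cardinal.one_lt_aleph0 hκ
  | succ n ih =>
      have e := (Fin.insertNthEquiv α 0).symm
      rw [Cardinal.mk_congr e, Cardinal.mk_prod, Cardinal.lift_id, Cardinal.lift_id]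
      exact Cardinal.mul_lt_of_lt hκ (h 0) (ih _ fun i => h _)

private lemma boxToBase [TopologicalSpace X] {n : ℕ} (hn : 0 < n)
    {κ : Cardinal.{u}} {B : Set (Set (Fin n → X))}
    (hB : IsBase B) (hbox : ∀ W ∈ B, IsBox W) (hop : IsOpLike B κ) :
    ∃ C : Set (Set X), IsBase C ∧ IsOpLike C κ := by
  classical
  set d : X → (Fin n → X) := fun x _ => x with hd
  have hdc : Continuous d := continuous_pi fun _ => continuous_id
  refine ⟨{S | S.Nonempty ∧ ∃ W ∈ B, S = d ⁻¹' W}, ⟨?_, ?_⟩, ?_⟩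
  · rintro S ⟨-, W, hWB, rfl⟩
    exact (hB.1 W hWB).preimage hdc
  · intro V hV p hp
    have hW₀ : IsOpen (Set.univ.pi fun _ : Fin n => V) :=
      isOpen_set_pi Set.finite_univ fun _ _ => hV
    have hpW₀ : d p ∈ Set.univ.pi fun _ : Fin n => V := fun i _ => hp
    obtain ⟨W, hWB, hpW, hWsub⟩ := hB.2 _ hW₀ (d p) hpW₀
    refine ⟨d ⁻¹' W, ⟨⟨p, hpW⟩, W, hWB, rfl⟩, hpW, ?_⟩
    intro x hx
    exact hWsub hx ⟨0, hn⟩ (Set.mem_univ _)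
  · rintro S ⟨⟨x, hx⟩, W, hWB, rfl⟩
    have hSopen : IsOpen (d ⁻¹' W) := (hB.1 W hWB).preimage hdc
    have hP : IsOpen (Set.univ.pi fun _ : Fin n => d ⁻¹' W) :=
      isOpen_set_pi Set.finite_univ fun _ _ => hSopen
    have hxP : d x ∈ Set.univ.pi fun _ : Fin n => d ⁻¹' W := fun i _ => hx
    obtain ⟨W'', hW''B, hxW'', hW''sub⟩ := hB.2 _ hP (d x) hxP
    have key : ∀ W' ∈ B, d ⁻¹' W ⊆ d ⁻¹' W' → W'' ⊆ W' := by
      intro W' hW'B hsub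
      refine hW''sub.trans ?_
      obtain ⟨U', hU'open, rfl⟩ := hbox W' hW'B
      intro f hf i _
      exact hsub (hf i (Set.mem_univ i)) i (Set.mem_univ i)
    have hinj : ∃ F : {V' : Set X // V' ∈ {S | S.Nonempty ∧ ∃ W ∈ B, S = d ⁻¹' W} ∧ d ⁻¹' W ⊆ V'} →
        {W' : Set (Fin n → X) // W' ∈ B ∧ W'' ⊆ W'}, Function.Injective F := by
      have pick : ∀ V' : {V' : Set X // V' ∈ {S | S.Nonempty ∧ ∃ W ∈ B, S = d ⁻¹' W} ∧ d ⁻¹' W ⊆ V'},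
          ∃ W' : Set (Fin n → X), W' ∈ B ∧ V'.1 = d ⁻¹' W' := by
        rintro ⟨V', ⟨-, W', hW'B, rfl⟩, -⟩
        exact ⟨W', hW'B, rfl⟩
      choose g hg1 hg2 using pick
      refine ⟨fun V' => ⟨g V', hg1 V', key _ (hg1 V') ?_⟩, ?_⟩
      · rw [← hg2 V']; exact V'.2.2
      · intro a b hab
        apply Subtype.ext
        have hgab : g a = g b := congrArg Subtype.val hab
        rw [hg2 a, hg2 b, hgab]
    obtain ⟨F, hF⟩ := hinj
    exact lt_of_le_of_lt (Cardinal.mk_le_of_injective hF) (hop W'' hW''B)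

private lemma baseToBox [TopologicalSpace X] {n : ℕ}
    {κ : Cardinal.{u}} (hκ : ℵ₀ ≤ κ) {C : Set (Set X)}
    (hC : IsBase C) (hop : IsOpLike C κ) :
    ∃ B : Set (Set (Fin n → X)), IsBase B ∧ (∀ W ∈ B, IsBox W) ∧ IsOpLike B κ := by
  classical
  refine ⟨{W | ∃ U : Fin n → Set X, (∀ i, U i ∈ C ∧ (U i).Nonempty) ∧ W = Set.univ.pi U},
    ⟨?_, ?_⟩, ?_, ?_⟩
  · rintro W ⟨U, hU, rfl⟩
    exact isOpen_set_pi Set.finite_univ fun i _ => hC.1 _ (hU i).1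
  · intro W hW f hf
    obtain ⟨I, u, hu, husub⟩ := isOpen_pi_iff.mp hW f hf
    have pick : ∀ i : Fin n, ∃ V, V ∈ C ∧ f i ∈ V ∧ V ⊆ (if i ∈ I then u i else Set.univ) := by
      intro i
      by_cases hi : i ∈ I
      · obtain ⟨V, hVC, hfV, hVsub⟩ := hC.2 (u i) (hu i hi).1 (f i) (hu i hi).2
        exact ⟨V, hVC, hfV, by simp [hi, hVsub]⟩
      · obtain ⟨V, hVC, hfV, hVsub⟩ := hC.2 Set.univ isOpen_univ (f i) (Set.mem_univ _)
        exact ⟨V, hVC, hfV, by simp [hi]⟩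
    choose U hU1 hU2 hU3 using pick
    refine ⟨Set.univ.pi U, ⟨U, fun i => ⟨hU1 i, ⟨f i, hU2 i⟩⟩, rfl⟩, fun i _ => hU2 i, ?_⟩
    intro g hg
    apply husub
    intro i hi
    have := hU3 i (hg i (Set.mem_univ i))
    rwa [if_pos (Finset.mem_coe.mp hi)] at this
  · rintro W ⟨U, hU, rfl⟩
    exact ⟨U, fun i => hC.1 _ (hU i).1, rfl⟩
  · rintro W ⟨U, hU, rfl⟩
    have hWne : (Set.univ.pi U).Nonempty :=
      Set.univ_pi_nonempty_iff.mpr fun i => (hU i).2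
    set Bset := {W : Set (Fin n → X) | ∃ U : Fin n → Set X,
      (∀ i, U i ∈ C ∧ (U i).Nonempty) ∧ W = Set.univ.pi U} with hBset
    have pick : ∀ W' : {W' : Set (Fin n → X) // W' ∈ Bset ∧ Set.univ.pi U ⊆ W'},
        ∃ U' : Fin n → Set X, (∀ i, U' i ∈ C ∧ (U' i).Nonempty) ∧ W'.1 = Set.univ.pi U' := by
      rintro ⟨W', ⟨U', hU', rfl⟩, -⟩
      exact ⟨U', hU', rfl⟩
    choose g hg1 hg2 using pick
    have hsub : ∀ (W' : {W' : Set (Fin n → X) // W' ∈ Bset ∧ Set.univ.pi U ⊆ W'}) (i : Fin n),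
        U i ⊆ g W' i := by
      intro W' i
      have h1 : Function.eval i '' Set.univ.pi U = U i := Set.eval_image_univ_pi hWne
      have hW'ne : (Set.univ.pi (g W')).Nonempty := by
        obtain ⟨f, hf⟩ := hWne
        exact ⟨f, (hg2 W') ▸ W'.2.2 hf⟩
      have h2 : Function.eval i '' Set.univ.pi (g W') = g W' i :=
        Set.eval_image_univ_pi hW'ne
      rw [← h1, ← h2]
      exact Set.image_mono ((hg2 W') ▸ W'.2.2)
    have hF : Function.Injective
        (fun W' : {W' : Set (Fin n → X) // W' ∈ Bset ∧ Set.univ.pi U ⊆ W'} =>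
          (fun i => (⟨g W' i, (hg1 W' i).1, hsub W' i⟩ :
            {V : Set X // V ∈ C ∧ U i ⊆ V}))) := by
      intro a b hab
      have hg : g a = g b := funext fun i => congrArg Subtype.val (congrFun hab i)
      apply Subtype.ext
      rw [hg2 a, hg2 b, hg]
    exact lt_of_le_of_lt (Cardinal.mk_le_of_injective hF)
      (mk_pi_lt hκ _ fun i => hop _ (hU i).1)

theorem ntBox_pow_eq_nt
    [TopologicalSpace X] [Nonempty X] (n : ℕ) (hn : 0 < n) :
    (∀ κ : Cardinal.{u},
      (∃ B : Set (Set (Fin n → X)), IsBase B ∧ (∀ W ∈ B, IsBox W) ∧ IsOpLike B κ) →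
      ∃ C : Set (Set X), IsBase C ∧ IsOpLike C κ) ∧
    NtBox n X = Nt X := by
  constructor
  · rintro κ ⟨B, hB, hbox, hop⟩
    exact boxToBase hn hB hbox hop
  · unfold NtBox Nt
    congr 1
    ext κ
    constructor
    · rintro ⟨hκ, B, hB, hbox, hop⟩
      obtain ⟨C, hC, hCop⟩ := boxToBase hn hB hbox hop
      exact ⟨hκ, C, hC, hCop⟩
    · rintro ⟨hκ, C, hC, hop⟩
      obtain ⟨B, h1, h2, h3⟩ := baseToBox hκ hC hop
      exact ⟨hκ, B, h1, h2, h3⟩
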